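/- Let ABC be a triangle and M the midpoint of the arc BAC of its circumcircle (the arc BC containing A). Then M is equidistant from B, C, and the excenter J_c of ABC opposite vertex C; in particular MB = MC = MJ_c. -/

import Mathlib

open EuclideanGeometry Metric AffineSubspace Real RealInnerProductSpace

noncomputable section

/-- The Euclidean plane. -/
abbrev Pt := EuclideanSpace ℝ (Fin 2)

/-- The line through two points. -/
def lineTh (A B : Pt) : AffineSubspace ℝ Pt := affineSpan ℝ {A, B}

/-- The circle with center `O` and radius `r` is tangent to the line `AB` at the point `E`. -/
def TangentAt (O : Pt) (r : ℝ) (A B E : Pt) : Prop :=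
  E ∈ lineTh A B ∧ dist O E = r ∧ ∀ Q ∈ lineTh A B, r ≤ dist O Q

/-- `I` is the incenter of triangle `ABC`: it lies strictly inside the triangle and is
equidistant from the three side lines. -/
def IsIncenter (I A B C : Pt) : Prop :=
  (lineTh B C).SSameSide I A ∧ (lineTh C A).SSameSide I B ∧ (lineTh A B).SSameSide I C ∧
  infDist I (lineTh B C : Set Pt) = infDist I (lineTh C A : Set Pt) ∧
  infDist I (lineTh C A : Set Pt) = infDist I (lineTh A B : Set Pt)

/-- `J` is the excenter of triangle `ABC` opposite the vertex `C`. -/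
def IsExcenterC (J A B C : Pt) : Prop :=
  (lineTh A B).SOppSide J C ∧ (lineTh C B).SSameSide J A ∧ (lineTh C A).SSameSide J B ∧
  infDist J (lineTh B C : Set Pt) = infDist J (lineTh C A : Set Pt) ∧
  infDist J (lineTh C A : Set Pt) = infDist J (lineTh A B : Set Pt)

namespace ArcMidAux

def det2 (A B P : Pt) : ℝ := (B 0 - A 0)*(P 1 - A 1) - (B 1 - A 1)*(P 0 - A 0)

lemma sq_eq_sq_nonneg {u v : ℝ} (hu : 0 ≤ u) (hv : 0 ≤ v) (h : u^2 = v^2) : u = v := by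
  rw [← Real.sqrt_sq hu, h, Real.sqrt_sq hv]

lemma le_of_sq_le_sq {u v : ℝ} (hu : 0 ≤ u) (hv : 0 ≤ v) (h : u^2 ≤ v^2) : u ≤ v := by
  nlinarith

lemma dist_sq (P Q : Pt) : dist P Q ^ 2 = (P 0 - Q 0)^2 + (P 1 - Q 1)^2 := by
  rw [EuclideanSpace.dist_eq, Real.sq_sqrt (by positivity)]
  simp [Fin.sum_univ_two, Real.dist_eq, sq_abs]

lemma mem_lineTh_iff {A B P : Pt} :
    P ∈ lineTh A B ↔ ∃ t : ℝ, P 0 = A 0 + t*(B 0 - A 0) ∧ P 1 = A 1 + t*(B 1 - A 1) := by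
  have h : P = (P -ᵥ A) +ᵥ A := by simp
  constructor
  · intro hP
    rw [h] at hP
    obtain ⟨t, ht⟩ := vadd_left_mem_affineSpan_pair.mp hP
    refine ⟨t, ?_, ?_⟩
    · have := congrArg (fun v : Pt => v 0) ht
      simp [PiLp.smul_apply, PiLp.sub_apply, smul_eq_mul] at this
      linarith [this]
    · have := congrArg (fun v : Pt => v 1) ht
      simp [PiLp.smul_apply, PiLp.sub_apply, smul_eq_mul] at this
      linarith [this]
  · rintro ⟨t, h0, h1⟩
    rw [h]
    refine vadd_left_mem_affineSpan_pair.mpr ⟨t, ?_⟩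
    ext i
    fin_cases i <;>
      simp [PiLp.smul_apply, PiLp.sub_apply, smul_eq_mul] <;> linarith

lemma ne_coord {A B : Pt} (h : A ≠ B) : (B 0 - A 0) ≠ 0 ∨ (B 1 - A 1) ≠ 0 := by
  by_contra hc
  push_neg at hc
  apply h
  ext i
  fin_cases i <;> [skip; skip] <;> simp <;> linarith [hc.1, hc.2]

lemma dist_sq' {A B : Pt} (h : A ≠ B) : 0 < dist A B ^ 2 := by
  have := dist_pos.mpr h
  positivity

lemma mem_of_det2_eq_zero {A B P : Pt} (hAB : A ≠ B) (h : det2 A B P = 0) :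
    P ∈ lineTh A B := by
  have hd : 0 < (B 0 - A 0)^2 + (B 1 - A 1)^2 := by
    rcases ne_coord hAB with h' | h' <;> positivity
  refine mem_lineTh_iff.mpr ⟨((P 0 - A 0)*(B 0 - A 0) + (P 1 - A 1)*(B 1 - A 1)) /
    ((B 0 - A 0)^2 + (B 1 - A 1)^2), ?_, ?_⟩
  · field_simp
    unfold det2 at h
    linear_combination (-(B 1 - A 1)) * h
  · field_simp
    unfold det2 at h
    linear_combination (B 0 - A 0) * h

lemma det2_eq_zero_of_mem {A B P : Pt} (h : P ∈ lineTh A B) : det2 A B P = 0 := by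
  obtain ⟨t, h0, h1⟩ := mem_lineTh_iff.mp h
  unfold det2
  rw [h0, h1]; ring

lemma det2_ne_zero_of_not_mem {A B P : Pt} (hAB : A ≠ B) (h : P ∉ lineTh A B) :
    det2 A B P ≠ 0 := fun hc => h (mem_of_det2_eq_zero hAB hc)

lemma infDist_lineTh {A B P : Pt} (hAB : A ≠ B) :
    infDist P (lineTh A B : Set Pt) = |det2 A B P| / dist A B := by
  have hd : 0 < dist A B := dist_pos.mpr hAB
  have hd2 : dist A B ^ 2 = (A 0 - B 0)^2 + (A 1 - B 1)^2 := dist_sq A B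
  have hd2' : 0 < (B 0 - A 0)^2 + (B 1 - A 1)^2 := by
    rcases ne_coord hAB with h' | h' <;> positivity
  have hne : (lineTh A B : Set Pt).Nonempty := ⟨A, left_mem_affineSpan_pair ℝ A B⟩
  refine le_antisymm ?_ ?_
  · -- upper bound: distance to the foot of perpendicular
    set s : ℝ := ((P 0 - A 0)*(B 0 - A 0) + (P 1 - A 1)*(B 1 - A 1)) /
      ((B 0 - A 0)^2 + (B 1 - A 1)^2) with hs
    set F : Pt := WithLp.toLp 2 ![A 0 + s*(B 0 - A 0), A 1 + s*(B 1 - A 1)] with hF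
    have hF0 : F 0 = A 0 + s*(B 0 - A 0) := rfl
    have hF1 : F 1 = A 1 + s*(B 1 - A 1) := rfl
    have hFm : F ∈ lineTh A B := mem_lineTh_iff.mpr ⟨s, hF0, hF1⟩
    refine le_trans (infDist_le_dist_of_mem hFm) ?_
    have hd2'' : 0 < (A 0 - B 0)^2 + (A 1 - B 1)^2 := by nlinarith [hd2']
    have hPF : dist P F ^ 2 = (|det2 A B P| / dist A B)^2 := by
      rw [dist_sq, hF0, hF1, div_pow, sq_abs, hd2]
      unfold det2
      rw [hs]
      field_simp
      ring
    exact le_of_eq (sq_eq_sq_nonneg dist_nonneg (by positivity) hPF)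
  · by_contra hcon
    rw [not_le, infDist_lt_iff hne] at hcon
    obtain ⟨Q, hQ, hQlt⟩ := hcon
    refine absurd hQlt (not_lt.mpr ?_)
    obtain ⟨t, h0, h1⟩ := mem_lineTh_iff.mp hQ
    rw [div_le_iff₀ hd]
    refine le_of_sq_le_sq (abs_nonneg _) (by positivity) ?_
    rw [mul_pow, sq_abs]
    have l1 : det2 A B P ^ 2 =
        ((B 0 - A 0)*(P 1 - Q 1) - (B 1 - A 1)*(P 0 - Q 0))^2 := by
      unfold det2; rw [h0, h1]; ring
    rw [l1, dist_sq P Q, hd2]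
    nlinarith [sq_nonneg ((P 0 - Q 0)*(B 0 - A 0) + (P 1 - Q 1)*(B 1 - A 1))]


lemma ray_key {A B P Q p₁ p₂ : Pt} (hp₁ : p₁ ∈ lineTh A B) (hp₂ : p₂ ∈ lineTh A B)
    {r₁ r₂ : ℝ} (hr : r₁ • (P -ᵥ p₁) = r₂ • (Q -ᵥ p₂)) :
    r₁ * det2 A B P = r₂ * det2 A B Q := by
  obtain ⟨s₁, hs₁0, hs₁1⟩ := mem_lineTh_iff.mp hp₁
  obtain ⟨s₂, hs₂0, hs₂1⟩ := mem_lineTh_iff.mp hp₂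
  have h0 := congrArg (fun v : Pt => v 0) hr
  have h1 := congrArg (fun v : Pt => v 1) hr
  simp only [PiLp.smul_apply, PiLp.sub_apply, vsub_eq_sub, smul_eq_mul] at h0 h1
  unfold det2
  linear_combination (B 0 - A 0)*h1 - (B 1 - A 1)*h0 + r₁*(B 0 - A 0)*hs₁1
    - r₁*(B 1 - A 1)*hs₁0 - r₂*(B 0 - A 0)*hs₂1 + r₂*(B 1 - A 1)*hs₂0

lemma vsub_ne_zero_of_not_mem {A B P p : Pt} (hp : p ∈ lineTh A B) (hP : P ∉ lineTh A B) :
    P -ᵥ p ≠ 0 := by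
  intro hz
  exact hP (by rwa [show P = p from by rwa [vsub_eq_zero_iff_eq] at hz])

lemma ssameSide_det2 {A B P Q : Pt} (hAB : A ≠ B) (h : (lineTh A B).SSameSide P Q) :
    0 < det2 A B P * det2 A B Q := by
  obtain ⟨⟨p₁, hp₁, p₂, hp₂, hray⟩, hP, hQ⟩ := h
  have hdP := det2_ne_zero_of_not_mem hAB hP
  have hdQ := det2_ne_zero_of_not_mem hAB hQ
  obtain ⟨r₁, r₂, hr₁, hr₂, hr⟩ := hray.exists_pos
    (vsub_ne_zero_of_not_mem hp₁ hP) (vsub_ne_zero_of_not_mem hp₂ hQ)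
  have key := ray_key hp₁ hp₂ hr
  have h3 : 0 < det2 A B P ^ 2 := by
    rcases lt_or_gt_of_ne hdP with h' | h' <;> nlinarith
  have h4 : r₂ * (det2 A B P * det2 A B Q) = r₁ * det2 A B P ^ 2 := by
    linear_combination (-(det2 A B P)) * key
  nlinarith [mul_pos hr₁ h3]

lemma soppSide_det2 {A B P Q : Pt} (hAB : A ≠ B) (h : (lineTh A B).SOppSide P Q) :
    det2 A B P * det2 A B Q < 0 := by
  obtain ⟨⟨p₁, hp₁, p₂, hp₂, hray⟩, hP, hQ⟩ := h
  have hdP := det2_ne_zero_of_not_mem hAB hP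
  have hdQ := det2_ne_zero_of_not_mem hAB hQ
  have hQne : p₂ -ᵥ Q ≠ 0 := by
    intro hz
    rw [vsub_eq_zero_iff_eq] at hz
    exact hQ (hz ▸ hp₂)
  obtain ⟨r₁, r₂, hr₁, hr₂, hr⟩ := hray.exists_pos (vsub_ne_zero_of_not_mem hp₁ hP) hQne
  -- r₁ • (P -ᵥ p₁) = r₂ • (p₂ -ᵥ Q); view RHS as (-r₂) • (Q -ᵥ p₂)
  have hr' : r₁ • (P -ᵥ p₁) = (-r₂) • (Q -ᵥ p₂) := by
    rw [hr, neg_smul, ← smul_neg, neg_vsub_eq_vsub_rev]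
  have key := ray_key hp₁ hp₂ hr'
  have h3 : 0 < det2 A B P ^ 2 := by
    rcases lt_or_gt_of_ne hdP with h' | h' <;> nlinarith
  have h4 : r₂ * (det2 A B P * det2 A B Q) = -(r₁ * det2 A B P ^ 2) := by
    linear_combination (det2 A B P) * key
  nlinarith [mul_pos hr₁ h3]


lemma core (a p q k m b c x y : ℝ)
    (ha : 0 < a) (hq : 0 < q) (hb : 0 < b) (hc : 0 < c)
    (hb2 : b^2 = (p-a)^2 + q^2) (hc2 : c^2 = p^2 + q^2)
    (hk : 2*q*k = c^2 - a*p)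
    (hm : m^2 - 2*k*m = a^2/4)
    (hm0 : 0 < m)
    (hy : 0 < y)
    (h2 : q*x - p*y < 0)
    (h3 : 0 < (p-a)*y - q*(x-a))
    (he1 : |a*y|/a = |(p-a)*y - q*(x-a)|/b)
    (he2 : |(p-a)*y - q*(x-a)|/b = |q*x - p*y|/c) :
    x^2 - a*x + y^2 - 2*m*y = 0 := by
  rw [abs_of_pos (by positivity), abs_of_pos h3] at he1
  rw [abs_of_pos h3, abs_of_neg h2] at he2
  have E1 : y*b = (p-a)*y - q*(x-a) := by
    field_simp at he1; linarith
  have E2 : y*c = p*y - q*x := by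
    field_simp at he2
    nlinarith [he2]
  have hyt : y*(a+b-c) = q*a := by linear_combination E1 - E2
  have ht : 0 < a + b - c := by nlinarith
  have hxt : x*(a+b-c) = a*(p-c) := by
    have hq' : q ≠ 0 := ne_of_gt hq
    have h5 : q*(x*(a+b-c)) = q*(a*(p-c)) := by
      linear_combination (a+b-c)*E2 + (p-c)*hyt
    exact mul_left_cancel₀ hq' h5
  have hbc : b^2*c^2 = (c^2 - a*p)^2 + a^2*q^2 := by
    linear_combination c^2*hb2 + (a^2 - c^2)*hc2
  have hmk : k < m := by nlinarith
  have hsq : (2*q*(m-k))^2 = (b*c)^2 := by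
    linear_combination (4*q^2)*hm + (2*q*k + c^2 - a*p)*hk - hbc
  have h2q : 2*q*(m-k) = b*c :=
    sq_eq_sq_nonneg (by nlinarith) (by positivity) hsq
  have h2m : 2*q*m = b*c + c^2 - a*p := by linear_combination h2q + hk
  have hfin : (x^2 - a*x + y^2 - 2*m*y) * (q * (a+b-c)^2) = 0 := by
    linear_combination (q*(x*(a+b-c) + a*(p-c)) - a*q*(a+b-c)) * hxt
      + (q*(y*(a+b-c) + q*a) - 2*m*q*(a+b-c)) * hyt
      - ((a+b-c)*q*a) * h2m - (q*a*c) * hb2 + (q*a*(c-a)) * hc2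
  have hpos : 0 < q * (a+b-c)^2 := by positivity
  rcases mul_eq_zero.mp hfin with h' | h'
  · exact h'
  · exact absurd h' (ne_of_gt hpos)



lemma core2 (a p q k m b c x y : ℝ)
    (ha : 0 < a) (hq : q ≠ 0) (hb : 0 < b) (hc : 0 < c)
    (hb2 : b^2 = (p-a)^2 + q^2) (hc2 : c^2 = p^2 + q^2)
    (hk : 2*q*k = c^2 - a*p)
    (hm : m^2 - 2*k*m = a^2/4)
    (hmq : 0 < m*q)
    (hyq : 0 < y*q)
    (h2 : (q*x - p*y)*(q*a) < 0)
    (h3 : 0 < ((p-a)*y - q*(x-a))*(q*a))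
    (he1 : |a*y|/a = |(p-a)*y - q*(x-a)|/b)
    (he2 : |(p-a)*y - q*(x-a)|/b = |q*x - p*y|/c) :
    x^2 - a*x + y^2 - 2*m*y = 0 := by
  rcases lt_or_gt_of_ne hq with hq' | hq'
  · have he1' : |a*(-y)|/a = |(p-a)*(-y) - (-q)*(x-a)|/b := by
      rw [show a*(-y) = -(a*y) by ring, abs_neg,
        show (p-a)*(-y) - (-q)*(x-a) = -((p-a)*y - q*(x-a)) by ring, abs_neg]
      exact he1
    have he2' : |(p-a)*(-y) - (-q)*(x-a)|/b = |(-q)*x - p*(-y)|/c := by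
      rw [show (p-a)*(-y) - (-q)*(x-a) = -((p-a)*y - q*(x-a)) by ring, abs_neg,
        show (-q)*x - p*(-y) = -(q*x - p*y) by ring, abs_neg]
      exact he2
    have := core a p (-q) (-k) (-m) b c x (-y) ha (by linarith) hb hc
      (by linear_combination hb2) (by linear_combination hc2)
      (by linear_combination hk) (by linear_combination hm)
      (by nlinarith) (by nlinarith)
      (by nlinarith [mul_pos (neg_pos.mpr hq') ha])
      (by nlinarith [mul_pos (neg_pos.mpr hq') ha])
      he1' he2'
    linear_combination this
  · exact core a p q k m b c x y ha hq' hb hc hb2 hc2 hk hm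
      (by nlinarith) (by nlinarith)
      (by nlinarith [mul_pos hq' ha]) (by nlinarith [mul_pos hq' ha]) he1 he2

lemma det2_cycle (A B C : Pt) : det2 A B C = det2 B C A := by unfold det2; ring

lemma det2_swap (A B P : Pt) : det2 B A P = -(det2 A B P) := by unfold det2; ring

end ArcMidAux

open ArcMidAux


set_option maxHeartbeats 2000000 in
/-- Variant of the incenter–excenter lemma: the midpoint of arc `BAC` is equidistant
from `B`, `C` and the excenter opposite `C`. -/
theorem arc_midpoint_excenter (A B C O M Jc : Pt) (R : ℝ)
    (hABC : AffineIndependent ℝ ![A, B, C])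
    (hOA : dist O A = R) (hOB : dist O B = R) (hOC : dist O C = R)
    (hM : dist O M = R) (hMB : dist M B = dist M C)
    (hMside : (lineTh B C).SSameSide M A)
    (hJ : IsExcenterC Jc A B C) :
    dist M B = dist M C ∧ dist M C = dist M Jc := by
  obtain ⟨hJ1, hJ2, hJ3, hJ4, hJ5⟩ := hJ
  have hinj := hABC.injective
  have hAB : A ≠ B := fun h => absurd (hinj (show ![A,B,C] 0 = ![A,B,C] 1 by simp [h])) (by decide)
  have hBC : B ≠ C := fun h => absurd (hinj (show ![A,B,C] 1 = ![A,B,C] 2 by simp [h])) (by decide)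
  have hCA : C ≠ A := fun h => absurd (hinj (show ![A,B,C] 2 = ![A,B,C] 0 by simp [h])) (by decide)
  have ha : (0:ℝ) < dist B C := dist_pos.mpr hBC
  have hb : (0:ℝ) < dist C A := dist_pos.mpr hCA
  have hc : (0:ℝ) < dist A B := dist_pos.mpr hAB
  have ha' : dist B C ≠ 0 := ne_of_gt ha
  have ha2 : dist B C ^ 2 = (C 0 - B 0)^2 + (C 1 - B 1)^2 := by
    rw [dist_sq]; ring
  have hAnot : A ∉ lineTh B C := fun hmem =>
    (affineIndependent_iff_not_collinear_set.mp hABC)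
      (collinear_insert_of_mem_affineSpan_pair hmem)
  have hdetA : det2 B C A ≠ 0 := det2_ne_zero_of_not_mem hBC hAnot
  have hq : (det2 B C (A) / dist B C) ≠ 0 := div_ne_zero hdetA ha'
  have tABJ : det2 A B Jc * dist B C ^2 = det2 B C A * (((Jc) 0 - B 0)*(C 0 - B 0) + ((Jc) 1 - B 1)*(C 1 - B 1)) - (((A) 0 - B 0)*(C 0 - B 0) + ((A) 1 - B 1)*(C 1 - B 1)) * det2 B C Jc := by
    rw [ha2]; unfold det2; ring
  have tCAJ : det2 C A Jc * dist B C ^2 = ((((A) 0 - B 0)*(C 0 - B 0) + ((A) 1 - B 1)*(C 1 - B 1)) - dist B C ^2) * det2 B C Jc - det2 B C A * ((((Jc) 0 - B 0)*(C 0 - B 0) + ((Jc) 1 - B 1)*(C 1 - B 1)) - dist B C ^2) := by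
    rw [ha2]; unfold det2; ring
  have nABJ : det2 A B Jc = (det2 B C (A) / dist B C)*((((Jc) 0 - B 0)*(C 0 - B 0) + ((Jc) 1 - B 1)*(C 1 - B 1))/dist B C) - ((((A) 0 - B 0)*(C 0 - B 0) + ((A) 1 - B 1)*(C 1 - B 1))/dist B C)*(det2 B C (Jc) / dist B C) := by
    field_simp
    linear_combination tABJ
  have nCAJ : det2 C A Jc = (((((A) 0 - B 0)*(C 0 - B 0) + ((A) 1 - B 1)*(C 1 - B 1))/dist B C)-dist B C)*(det2 B C (Jc) / dist B C) - (det2 B C (A) / dist B C)*(((((Jc) 0 - B 0)*(C 0 - B 0) + ((Jc) 1 - B 1)*(C 1 - B 1))/dist B C)-dist B C) := by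
    field_simp
    linear_combination tCAJ
  have nABC : det2 A B C = (det2 B C (A) / dist B C)*dist B C := by
    rw [det2_cycle A B C]; field_simp
  have nCAB : det2 C A B = (det2 B C (A) / dist B C)*dist B C := by
    rw [show det2 C A B = det2 A B C from by unfold det2; ring, det2_cycle A B C]
    field_simp
  have dsq : ∀ P Q : Pt, dist P Q ^2 = (((((P) 0 - B 0)*(C 0 - B 0) + ((P) 1 - B 1)*(C 1 - B 1))/dist B C) - ((((Q) 0 - B 0)*(C 0 - B 0) + ((Q) 1 - B 1)*(C 1 - B 1))/dist B C))^2 + ((det2 B C (P) / dist B C) - (det2 B C (Q) / dist B C))^2 := by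
    intro P Q
    rw [dist_sq P Q]
    unfold det2
    field_simp
    linear_combination (((P) 0 - (Q) 0)^2 + ((P) 1 - (Q) 1)^2) * ha2
  have hFB : ((((B) 0 - B 0)*(C 0 - B 0) + ((B) 1 - B 1)*(C 1 - B 1))/dist B C) = 0 := by
    rw [div_eq_zero_iff]; left; ring
  have hGB : (det2 B C (B) / dist B C) = 0 := by
    rw [div_eq_zero_iff]; left; unfold det2; ring
  have hFC : ((((C) 0 - B 0)*(C 0 - B 0) + ((C) 1 - B 1)*(C 1 - B 1))/dist B C) = dist B C := by
    field_simp
    linear_combination (-1)*ha2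
  have hGC : (det2 B C (C) / dist B C) = 0 := by
    rw [div_eq_zero_iff]; left; unfold det2; ring
  have hMBC : dist M B ^2 = dist M C ^2 := by rw [hMB]
  have hOBC : dist O B ^2 = dist O C ^2 := by rw [hOB, hOC]
  have hmF : ((((M) 0 - B 0)*(C 0 - B 0) + ((M) 1 - B 1)*(C 1 - B 1))/dist B C) = dist B C/2 := by
    have h1 := dsq M B
    have h2 := dsq M C
    rw [hFB, hGB] at h1
    rw [hFC, hGC] at h2
    have h4 : 2*(dist B C)*(((((M) 0 - B 0)*(C 0 - B 0) + ((M) 1 - B 1)*(C 1 - B 1))/dist B C) - dist B C/2) = 0 := by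
      linear_combination h2 - h1 + hMBC
    rcases mul_eq_zero.mp h4 with h' | h'
    · exact absurd h' (by positivity)
    · linarith [sub_eq_zero.mp h']
  have hkF : ((((O) 0 - B 0)*(C 0 - B 0) + ((O) 1 - B 1)*(C 1 - B 1))/dist B C) = dist B C/2 := by
    have h1 := dsq O B
    have h2 := dsq O C
    rw [hFB, hGB] at h1
    rw [hFC, hGC] at h2
    have h4 : 2*(dist B C)*(((((O) 0 - B 0)*(C 0 - B 0) + ((O) 1 - B 1)*(C 1 - B 1))/dist B C) - dist B C/2) = 0 := by
      linear_combination h2 - h1 + hOBC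
    rcases mul_eq_zero.mp h4 with h' | h'
    · exact absurd h' (by positivity)
    · linarith [sub_eq_zero.mp h']
  have hOAB : dist O A ^2 = dist O B ^2 := by rw [hOA, hOB]
  have hOMB : dist O M ^2 = dist O B ^2 := by rw [hM, hOB]
  have hc2 : (dist A B)^2 = (((((A) 0 - B 0)*(C 0 - B 0) + ((A) 1 - B 1)*(C 1 - B 1))/dist B C))^2 + ((det2 B C (A) / dist B C))^2 := by
    have h1 := dsq A B
    rw [hFB, hGB] at h1
    linear_combination h1
  have hb2 : (dist C A)^2 = (((((A) 0 - B 0)*(C 0 - B 0) + ((A) 1 - B 1)*(C 1 - B 1))/dist B C)-dist B C)^2 + ((det2 B C (A) / dist B C))^2 := by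
    have h1 := dsq C A
    rw [hFC, hGC] at h1
    linear_combination h1
  have hk : 2*(det2 B C (A) / dist B C)*(det2 B C (O) / dist B C) = (dist A B)^2 - dist B C*((((A) 0 - B 0)*(C 0 - B 0) + ((A) 1 - B 1)*(C 1 - B 1))/dist B C) := by
    have h1 := dsq O A
    have h2 := dsq O B
    rw [hFB, hGB] at h2
    have h3 : (((((O) 0 - B 0)*(C 0 - B 0) + ((O) 1 - B 1)*(C 1 - B 1))/dist B C) - ((((A) 0 - B 0)*(C 0 - B 0) + ((A) 1 - B 1)*(C 1 - B 1))/dist B C))^2 + ((det2 B C (O) / dist B C) - (det2 B C (A) / dist B C))^2 = (((((O) 0 - B 0)*(C 0 - B 0) + ((O) 1 - B 1)*(C 1 - B 1))/dist B C))^2 + ((det2 B C (O) / dist B C))^2 := by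
      linear_combination h2 - h1 + hOAB
    linear_combination (-1)*h3 + (-1)*hc2 + (-2*((((A) 0 - B 0)*(C 0 - B 0) + ((A) 1 - B 1)*(C 1 - B 1))/dist B C))*hkF
  have hm : ((det2 B C (M) / dist B C))^2 - 2*(det2 B C (O) / dist B C)*(det2 B C (M) / dist B C) = (dist B C)^2/4 := by
    have h1 := dsq O M
    have h2 := dsq O B
    rw [hFB, hGB] at h2
    have h3 : (((((O) 0 - B 0)*(C 0 - B 0) + ((O) 1 - B 1)*(C 1 - B 1))/dist B C) - ((((M) 0 - B 0)*(C 0 - B 0) + ((M) 1 - B 1)*(C 1 - B 1))/dist B C))^2 + ((det2 B C (O) / dist B C) - (det2 B C (M) / dist B C))^2 = (((((O) 0 - B 0)*(C 0 - B 0) + ((O) 1 - B 1)*(C 1 - B 1))/dist B C))^2 + ((det2 B C (O) / dist B C))^2 := by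
      linear_combination h2 - h1 + hOMB
    linear_combination h3 + (2*((((M) 0 - B 0)*(C 0 - B 0) + ((M) 1 - B 1)*(C 1 - B 1))/dist B C))*hkF + (dist B C/2 - ((((M) 0 - B 0)*(C 0 - B 0) + ((M) 1 - B 1)*(C 1 - B 1))/dist B C))*hmF
  have sM := ssameSide_det2 hBC hMside
  have hmq : 0 < (det2 B C (M) / dist B C)*(det2 B C (A) / dist B C) := by
    rw [show (det2 B C (M) / dist B C)*(det2 B C (A) / dist B C) = det2 B C M * det2 B C A / (dist B C)^2 from by ring]
    exact div_pos sM (by positivity)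
  have sJ2 : 0 < det2 B C Jc * det2 B C A := by
    have h := ssameSide_det2 (Ne.symm hBC) hJ2
    rwa [det2_swap B C Jc, det2_swap B C A, neg_mul_neg] at h
  have hyq : 0 < (det2 B C (Jc) / dist B C)*(det2 B C (A) / dist B C) := by
    rw [show (det2 B C (Jc) / dist B C)*(det2 B C (A) / dist B C) = det2 B C Jc * det2 B C A / (dist B C)^2 from by ring]
    exact div_pos sJ2 (by positivity)
  have sJ1 := soppSide_det2 hAB hJ1
  have h2 : ((det2 B C (A) / dist B C)*((((Jc) 0 - B 0)*(C 0 - B 0) + ((Jc) 1 - B 1)*(C 1 - B 1))/dist B C) - ((((A) 0 - B 0)*(C 0 - B 0) + ((A) 1 - B 1)*(C 1 - B 1))/dist B C)*(det2 B C (Jc) / dist B C))*((det2 B C (A) / dist B C)*dist B C) < 0 := by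
    rw [← nABJ, ← nABC]; exact sJ1
  have sJ3 := ssameSide_det2 hCA hJ3
  have h3 : 0 < ((((((A) 0 - B 0)*(C 0 - B 0) + ((A) 1 - B 1)*(C 1 - B 1))/dist B C)-dist B C)*(det2 B C (Jc) / dist B C) - (det2 B C (A) / dist B C)*(((((Jc) 0 - B 0)*(C 0 - B 0) + ((Jc) 1 - B 1)*(C 1 - B 1))/dist B C)-dist B C))*((det2 B C (A) / dist B C)*dist B C) := by
    rw [← nCAJ, ← nCAB]; exact sJ3
  have he1 : |dist B C*(det2 B C (Jc) / dist B C)|/dist B C = |(((((A) 0 - B 0)*(C 0 - B 0) + ((A) 1 - B 1)*(C 1 - B 1))/dist B C)-dist B C)*(det2 B C (Jc) / dist B C) - (det2 B C (A) / dist B C)*(((((Jc) 0 - B 0)*(C 0 - B 0) + ((Jc) 1 - B 1)*(C 1 - B 1))/dist B C)-dist B C)|/dist C A := by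
    have h := hJ4
    rw [infDist_lineTh hBC, infDist_lineTh hCA] at h
    rw [show dist B C*(det2 B C (Jc) / dist B C) = det2 B C Jc from by field_simp,
      show (((((A) 0 - B 0)*(C 0 - B 0) + ((A) 1 - B 1)*(C 1 - B 1))/dist B C)-dist B C)*(det2 B C (Jc) / dist B C) - (det2 B C (A) / dist B C)*(((((Jc) 0 - B 0)*(C 0 - B 0) + ((Jc) 1 - B 1)*(C 1 - B 1))/dist B C)-dist B C) = det2 C A Jc from nCAJ.symm]
    exact h
  have he2 : |(((((A) 0 - B 0)*(C 0 - B 0) + ((A) 1 - B 1)*(C 1 - B 1))/dist B C)-dist B C)*(det2 B C (Jc) / dist B C) - (det2 B C (A) / dist B C)*(((((Jc) 0 - B 0)*(C 0 - B 0) + ((Jc) 1 - B 1)*(C 1 - B 1))/dist B C)-dist B C)|/dist C A = |(det2 B C (A) / dist B C)*((((Jc) 0 - B 0)*(C 0 - B 0) + ((Jc) 1 - B 1)*(C 1 - B 1))/dist B C) - ((((A) 0 - B 0)*(C 0 - B 0) + ((A) 1 - B 1)*(C 1 - B 1))/dist B C)*(det2 B C (Jc) / dist B C)|/dist A B := by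
    have h := hJ5
    rw [infDist_lineTh hCA, infDist_lineTh hAB] at h
    rw [show (((((A) 0 - B 0)*(C 0 - B 0) + ((A) 1 - B 1)*(C 1 - B 1))/dist B C)-dist B C)*(det2 B C (Jc) / dist B C) - (det2 B C (A) / dist B C)*(((((Jc) 0 - B 0)*(C 0 - B 0) + ((Jc) 1 - B 1)*(C 1 - B 1))/dist B C)-dist B C) = det2 C A Jc from nCAJ.symm,
      show (det2 B C (A) / dist B C)*((((Jc) 0 - B 0)*(C 0 - B 0) + ((Jc) 1 - B 1)*(C 1 - B 1))/dist B C) - ((((A) 0 - B 0)*(C 0 - B 0) + ((A) 1 - B 1)*(C 1 - B 1))/dist B C)*(det2 B C (Jc) / dist B C) = det2 A B Jc from nABJ.symm]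
    exact h
  have key := core2 (dist B C) (((((A) 0 - B 0)*(C 0 - B 0) + ((A) 1 - B 1)*(C 1 - B 1))/dist B C)) ((det2 B C (A) / dist B C)) ((det2 B C (O) / dist B C)) ((det2 B C (M) / dist B C)) (dist C A) (dist A B) (((((Jc) 0 - B 0)*(C 0 - B 0) + ((Jc) 1 - B 1)*(C 1 - B 1))/dist B C)) ((det2 B C (Jc) / dist B C))
    ha hq hb hc hb2 hc2 hk hm hmq hyq h2 h3 he1 he2
  refine ⟨hMB, ?_⟩
  have hMC2 : dist M C ^2 = dist M Jc ^2 := by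
    have h1 := dsq M C
    have h2 := dsq M Jc
    rw [hFC, hGC] at h1
    linear_combination h1 - h2 - key + (2*((((Jc) 0 - B 0)*(C 0 - B 0) + ((Jc) 1 - B 1)*(C 1 - B 1))/dist B C) - 2*dist B C)*hmF
  exact sq_eq_sq_nonneg dist_nonneg dist_nonneg hMC2
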